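/- Let g', b be natural numbers, m ≥ 1, let h : Fin b → ZMod m, and set m₀ = Nat.gcd m (Finset.univ.gcd (fun k => (h k).val)). There exists a surjective group homomorphism ψ : Ξ_{g',b} →* Multiplicative (ZMod m) with ψ(γ_k) = Multiplicative.ofAdd (h k) for all k, if and only if ∑_k h k = 0 in ZMod m and (g' ≥ 1 or m₀ = 1). -/

import Mathlib

open scoped commutatorElement in
/-- The single relator `(∏_j [A_j, B_j]) · γ_1 ⋯ γ_b` in the free group on
`(Fin g' ⊕ Fin g') ⊕ Fin b`, where `A_j`, `B_j`, `γ_k` are the free generators indexed by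
the left, middle and right summands, products taken in the order of the indices. -/
def surfaceRelator (g' b : ℕ) : FreeGroup ((Fin g' ⊕ Fin g') ⊕ Fin b) :=
  (List.ofFn fun j : Fin g' =>
      ⁅(FreeGroup.of (Sum.inl (Sum.inl j)) : FreeGroup ((Fin g' ⊕ Fin g') ⊕ Fin b)),
        FreeGroup.of (Sum.inl (Sum.inr j))⁆).prod *
  (List.ofFn fun k : Fin b =>
      (FreeGroup.of (Sum.inr k) : FreeGroup ((Fin g' ⊕ Fin g') ⊕ Fin b))).prod

/-- The fundamental group `Ξ_{g',b}` of a genus `g'` surface with `b` punctures, presented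
with generators `A_j, B_j (j < g')`, `γ_k (k < b)` and the single surface relator. -/
abbrev SurfaceGroup (g' b : ℕ) : Type :=
  PresentedGroup ({surfaceRelator g' b} : Set (FreeGroup ((Fin g' ⊕ Fin g') ⊕ Fin b)))

/-- The image `γ_k` of the `k`-th puncture generator in `Ξ_{g',b}`. -/
def SurfaceGroup.gamma {g' b : ℕ} (k : Fin b) : SurfaceGroup g' b :=
  PresentedGroup.of (Sum.inr k)

open scoped commutatorElement in
lemma hom_surfaceRelator {g' b : ℕ} {M : Type*} [CommGroup M]
    (φ : FreeGroup ((Fin g' ⊕ Fin g') ⊕ Fin b) →* M) :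
    φ (surfaceRelator g' b) = ∏ k, φ (FreeGroup.of (Sum.inr k)) := by
  unfold surfaceRelator
  rw [map_mul, map_list_prod, map_list_prod, List.map_ofFn, List.map_ofFn,
    List.prod_ofFn, List.prod_ofFn]
  have : ∀ j : Fin g', (φ ∘ fun j : Fin g' =>
      ⁅(FreeGroup.of (Sum.inl (Sum.inl j)) : FreeGroup ((Fin g' ⊕ Fin g') ⊕ Fin b)),
        FreeGroup.of (Sum.inl (Sum.inr j))⁆) j = 1 := by
    intro j
    simp only [Function.comp_apply, map_commutatorElement]
    exact commutatorElement_eq_one_iff_commute.mpr (mul_comm _ _)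
  rw [Finset.prod_congr rfl fun j _ => this j]
  simp

lemma ofAdd_mem_of_gcd {m b : ℕ} (hm : 1 ≤ m) (T : Subgroup (Multiplicative (ZMod m)))
    (h : Fin b → ZMod m) (hT : ∀ k, Multiplicative.ofAdd (h k) ∈ T)
    (hg : Nat.gcd m (Finset.univ.gcd fun k => (h k).val) = 1) (x : ZMod m) :
    Multiplicative.ofAdd x ∈ T := by
  haveI : NeZero m := ⟨by omega⟩
  have key : ∀ s : Finset (Fin b),
      Multiplicative.ofAdd (((s.gcd fun k => (h k).val : ℕ) : ZMod m)) ∈ T := by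
    intro s
    induction s using Finset.induction_on with
    | empty => simpa using T.one_mem
    | @insert a s ha ih =>
      rw [Finset.gcd_insert]
      set p := (h a).val
      set q := s.gcd fun k => (h k).val
      have hgcd : (gcd p q : ℕ) = Nat.gcd p q := rfl
      rw [hgcd]
      have bez : ((Nat.gcd p q : ℕ) : ℤ) = p * Nat.gcdA p q + q * Nat.gcdB p q :=
        Nat.gcd_eq_gcd_ab p q
      have : ((Nat.gcd p q : ℕ) : ZMod m)
          = Nat.gcdA p q • ((p : ZMod m)) + Nat.gcdB p q • ((q : ZMod m)) := by
        have := congrArg (fun z : ℤ => (z : ZMod m)) bez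
        push_cast at this ⊢
        rw [this, zsmul_eq_mul, zsmul_eq_mul]; ring
      rw [this, ofAdd_add, ofAdd_zsmul, ofAdd_zsmul]
      have hp : Multiplicative.ofAdd ((p : ZMod m)) ∈ T := by
        have : ((p : ZMod m)) = h a := by simp [p, ZMod.natCast_val, ZMod.cast_id]
        rw [this]; exact hT a
      exact T.mul_mem (T.zpow_mem hp _) (T.zpow_mem ih _)
  set G := Finset.univ.gcd fun k => (h k).val with hG
  have bez : ((Nat.gcd m G : ℕ) : ℤ) = m * Nat.gcdA m G + G * Nat.gcdB m G :=
    Nat.gcd_eq_gcd_ab m G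
  rw [hg] at bez
  have h1 : (1 : ZMod m) = Nat.gcdB m G • ((G : ZMod m)) := by
    have := congrArg (fun z : ℤ => (z : ZMod m)) bez
    push_cast at this
    rw [ZMod.natCast_self] at this
    simp at this
    rw [this, zsmul_eq_mul]; ring
  have hx : x = (x.val : ℤ) • ((1 : ZMod m)) := by
    simp [ZMod.natCast_val, ZMod.cast_id]
  rw [hx, h1, smul_smul, ofAdd_zsmul]
  exact T.zpow_mem (key Finset.univ) _

/-- There is a surjection `ψ : Ξ_{g',b} → ℤ/mℤ` with `ψ(γ_k) = h_k` for all `k` iff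
`∑ h_k = 0` in `ℤ/mℤ` and moreover `g' ≥ 1` or `gcd(m, h₁, …, h_b) = 1`. -/
theorem exists_surjection_surfaceGroup_zmod_iff (g' b m : ℕ) (hm : 1 ≤ m)
    (h : Fin b → ZMod m) :
    (∃ ψ : SurfaceGroup g' b →* Multiplicative (ZMod m),
        Function.Surjective ψ ∧
          ∀ k : Fin b, ψ (SurfaceGroup.gamma k) = Multiplicative.ofAdd (h k)) ↔
      (∑ k, h k = 0 ∧
        (1 ≤ g' ∨ Nat.gcd m (Finset.univ.gcd fun k => (h k).val) = 1)) := by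
  haveI : NeZero m := ⟨by omega⟩
  constructor
  · rintro ⟨ψ, hsurj, hγ⟩
    set rels := ({surfaceRelator g' b} : Set (FreeGroup ((Fin g' ⊕ Fin g') ⊕ Fin b)))
    have hmk1 : PresentedGroup.mk rels (surfaceRelator g' b) = 1 :=
      (QuotientGroup.eq_one_iff _).mpr
        (Subgroup.subset_normalClosure (Set.mem_singleton _))
    have hφ := hom_surfaceRelator (ψ.comp (PresentedGroup.mk rels))
    rw [MonoidHom.comp_apply, hmk1, map_one] at hφ
    have hprod : ∏ k, Multiplicative.ofAdd (h k) = 1 :=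
      (Finset.prod_congr rfl fun k _ => (hγ k).symm).trans hφ.symm
    have hsum : ∑ k, h k = 0 := by
      have := hprod
      rw [← ofAdd_sum] at this
      exact ofAdd_eq_one.mp this
    refine ⟨hsum, ?_⟩
    by_cases hg' : 1 ≤ g'
    · exact Or.inl hg'
    · right
      have hg0 : g' = 0 := by omega
      subst hg0
      set G := Finset.univ.gcd fun k => (h k).val with hG
      set d := Nat.gcd m G with hd
      have hdm : d ∣ m := Nat.gcd_dvd_left m G
      haveI : NeZero d := ⟨fun h0 => by
        have := (Nat.gcd_eq_zero_iff.mp h0).1; omega⟩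
      set f' : Multiplicative (ZMod m) →* Multiplicative (ZMod d) :=
        AddMonoidHom.toMultiplicative (ZMod.castHom hdm (ZMod d)).toAddMonoidHom with hf'
      have hker : ∀ z : SurfaceGroup 0 b, f' (ψ z) = 1 := by
        intro z
        have := PresentedGroup.generated_by rels ((f'.comp ψ).ker) ?_ z
        · simpa [MonoidHom.mem_ker] using this
        · rintro ((j | j) | k)
          · exact j.elim0
          · exact j.elim0
          · simp only [MonoidHom.mem_ker, MonoidHom.comp_apply]
            have : PresentedGroup.of (rels := rels) (Sum.inr k) = SurfaceGroup.gamma k := rfl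
            rw [this, hγ k]
            have hdvd : d ∣ (h k).val :=
              dvd_trans (Nat.gcd_dvd_right m G) (Finset.gcd_dvd (Finset.mem_univ k))
            have hcast : ((h k).val : ZMod d) = 0 :=
              (ZMod.natCast_eq_zero_iff _ _).mpr hdvd
            have : (ZMod.castHom hdm (ZMod d)) (h k) = 0 := by
              rw [ZMod.castHom_apply, ← ZMod.natCast_val, hcast]
            simp [hf', this]
      obtain ⟨z, hz⟩ := hsurj (Multiplicative.ofAdd (1 : ZMod m))
      have h1 := hker z
      rw [hz] at h1
      have h2 : (ZMod.castHom hdm (ZMod d)) (1 : ZMod m) = 0 := by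
        simpa [hf'] using h1
      rw [map_one] at h2
      have hdvd1 : d ∣ 1 := by
        have : ((1 : ℕ) : ZMod d) = 0 := by simpa using h2
        exact (ZMod.natCast_eq_zero_iff _ _).mp this
      exact Nat.dvd_one.mp hdvd1
  · rintro ⟨hsum, hcase⟩
    set rels := ({surfaceRelator g' b} : Set (FreeGroup ((Fin g' ⊕ Fin g') ⊕ Fin b)))
    set f : ((Fin g' ⊕ Fin g') ⊕ Fin b) → Multiplicative (ZMod m) :=
      Sum.elim (Sum.elim (fun _ => Multiplicative.ofAdd (1 : ZMod m)) fun _ => 1)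
        (fun k => Multiplicative.ofAdd (h k)) with hf
    have hrel : ∀ r ∈ rels, FreeGroup.lift f r = 1 := by
      intro r hr
      rw [Set.mem_singleton_iff] at hr
      subst hr
      rw [hom_surfaceRelator]
      have : ∀ k : Fin b, (FreeGroup.lift f) (FreeGroup.of (Sum.inr k))
          = Multiplicative.ofAdd (h k) := by
        intro k; rw [FreeGroup.lift_apply_of, hf]; simp
      rw [Finset.prod_congr rfl fun k _ => this k, ← ofAdd_sum, hsum]
      rfl
    set ψ := PresentedGroup.toGroup hrel with hψ
    have hγ : ∀ k, ψ (SurfaceGroup.gamma k) = Multiplicative.ofAdd (h k) := by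
      intro k
      rw [hψ]
      show PresentedGroup.toGroup hrel (PresentedGroup.of (Sum.inr k)) = _
      rw [PresentedGroup.toGroup.of hrel, hf]
      simp
    refine ⟨ψ, ?_, hγ⟩
    rcases hcase with hg' | hgcd
    · intro y
      obtain ⟨j, hj⟩ : ∃ j : Fin g', True := ⟨⟨0, hg'⟩, trivial⟩
      set x := Multiplicative.toAdd y with hx
      refine ⟨(PresentedGroup.of (rels := rels) (Sum.inl (Sum.inl j))) ^ (x.val), ?_⟩
      rw [map_pow]
      have h1 : ψ (PresentedGroup.of (rels := rels) (Sum.inl (Sum.inl j)))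
          = Multiplicative.ofAdd (1 : ZMod m) := PresentedGroup.toGroup.of hrel
      rw [h1, ← ofAdd_nsmul]
      have : (x.val) • (1 : ZMod m) = x := by
        simp [nsmul_eq_mul, ZMod.natCast_val, ZMod.cast_id]
      rw [this, hx]
      simp
    · intro y
      have := ofAdd_mem_of_gcd hm ψ.range h
        (fun k => ⟨SurfaceGroup.gamma k, hγ k⟩) hgcd (Multiplicative.toAdd y)
      obtain ⟨z, hz⟩ := this
      exact ⟨z, by simpa using hz⟩
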